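/- arXiv:1402.1640 — 2 statements merged into one kernel-verified Lean document; each statement's English description precedes it below -/
import Mathlib

section
/- Let β, γ ∈ Z_2^×. Then the ternary quadratic form x^2 - y^2 - 2βγ z^2 over Z_2 primitively represents every element of Z_2 \ 4Z_2^×: every t ∈ Z_2 with t not of the form 4δ for a unit δ admits a representation t = x^2 - y^2 - 2βγ z^2 with (x,y,z) a primitive vector over Z_2. -/
lemma dvd_two_iff' (x : ℤ_[2]) : (2 : ℤ_[2]) ∣ x ↔ ¬ IsUnit x := by
  rw [PadicInt.not_isUnit_iff, PadicInt.norm_lt_one_iff_dvd]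
  norm_num

lemma toZMod_zero_iff' (x : ℤ_[2]) : PadicInt.toZMod x = 0 ↔ (2 : ℤ_[2]) ∣ x := by
  rw [← RingHom.mem_ker, PadicInt.ker_toZMod, PadicInt.maximalIdeal_eq_span_p,
    Ideal.mem_span_singleton]
  norm_num

lemma odd_add' (a b : ℤ_[2]) (ha : ¬ (2 : ℤ_[2]) ∣ a) (hb : ¬ (2 : ℤ_[2]) ∣ b) :
    (2 : ℤ_[2]) ∣ (a + b) := by
  rw [← toZMod_zero_iff'] at ha hb ⊢
  have h : ∀ v : ZMod 2, v = 0 ∨ v = 1 := by decide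
  rw [map_add]
  rcases h (PadicInt.toZMod a) with h1 | h1
  · exact absurd h1 ha
  rcases h (PadicInt.toZMod b) with h2 | h2
  · exact absurd h2 hb
  rw [h1, h2]; decide

/-- For `2`-adic units `β, γ`, the form `x² - y² - 2βγ z²` primitively represents
every element of `ℤ₂` not of the form `4δ` with `δ` a unit. -/
theorem primitive_rep_outside_four_units (β γ : ℤ_[2]) (hβ : IsUnit β) (hγ : IsUnit γ)
    (t : ℤ_[2]) (ht : ¬ ∃ δ : ℤ_[2], IsUnit δ ∧ t = 4 * δ) :
    ∃ x y z : ℤ_[2], ¬ ((2 : ℤ_[2]) ∣ x ∧ (2 : ℤ_[2]) ∣ y ∧ (2 : ℤ_[2]) ∣ z) ∧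
      t = x ^ 2 - y ^ 2 - 2 * β * γ * z ^ 2 := by
  have h2one : ¬ (2 : ℤ_[2]) ∣ 1 := by rw [dvd_two_iff']; simp
  by_cases h2 : (2 : ℤ_[2]) ∣ t
  · obtain ⟨s, rfl⟩ := h2
    by_cases h4 : (2 : ℤ_[2]) ∣ s
    · obtain ⟨m, rfl⟩ := h4
      have hm : (2 : ℤ_[2]) ∣ m := by
        rw [dvd_two_iff']; intro hu; exact ht ⟨m, hu, by ring⟩
      obtain ⟨k, rfl⟩ := hm
      refine ⟨2 * k + 1, 2 * k - 1, 0, ?_, by ring⟩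
      rintro ⟨hx, -, -⟩
      exact h2one (by simpa using hx.sub (⟨k, rfl⟩ : (2 : ℤ_[2]) ∣ 2 * k))
    · have hβγ : ¬ (2 : ℤ_[2]) ∣ β * γ := by rw [dvd_two_iff']; simp [hβ.mul hγ]
      obtain ⟨δ, hδ⟩ := odd_add' s (β * γ) h4 hβγ
      refine ⟨1 + δ, 1 - δ, 1, ?_, by linear_combination 2 * hδ⟩
      rintro ⟨-, -, hz⟩
      exact h2one hz
  · obtain ⟨x, hx⟩ := odd_add' t 1 h2 h2one
    have hneg : ¬ (2 : ℤ_[2]) ∣ (-1) := by rw [dvd_two_iff']; simp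
    obtain ⟨y, hy⟩ := odd_add' t (-1) h2 hneg
    refine ⟨x, y, 0, ?_, ?_⟩
    · rintro ⟨hxd, hyd, -⟩
      have hxy : x - y = 1 := by
        have h : (2 : ℤ_[2]) * (x - y) = 2 * 1 := by linear_combination hy - hx
        exact mul_left_cancel₀ (by norm_num) h
      exact h2one (hxy ▸ hxd.sub hyd)
    · have h4 : (4 : ℤ_[2]) * t = 4 * (x ^ 2 - y ^ 2 - 2 * β * γ * 0 ^ 2) := by
        linear_combination (t + 1 + 2 * x) * hx - (t - 1 + 2 * y) * hy
      exact mul_left_cancel₀ (by norm_num : (4 : ℤ_[2]) ≠ 0) h4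
end

section
/- Let β ∈ Z_2^× and let η ∈ Z_2^× satisfy η ≡ β (mod 4) and η ≢ β (mod 8). Then 2η is not represented by the quadratic form x^2 + 2β y^2 - 4 z^2 over Z_2. -/
lemma padic_two_residue (a : ℤ_[2]) : (2 : ℤ_[2]) ∣ a ∨ (2 : ℤ_[2]) ∣ (a - 1) := by
  have hspec : ∀ b : ℤ_[2], PadicInt.toZMod b = 0 → (2 : ℤ_[2]) ∣ b := by
    intro b hb
    have : b ∈ RingHom.ker (PadicInt.toZMod : ℤ_[2] →+* ZMod 2) := hb
    rw [PadicInt.ker_toZMod, PadicInt.maximalIdeal_eq_span_p,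
      Ideal.mem_span_singleton] at this
    exact_mod_cast this
  rcases (by decide : ∀ c : ZMod 2, c = 0 ∨ c = 1) (PadicInt.toZMod a) with h | h
  · exact Or.inl (hspec a h)
  · refine Or.inr (hspec _ ?_)
    simp [map_sub, h]

lemma padic_unit_sq (y : ℤ_[2]) (hy : ¬ (2 : ℤ_[2]) ∣ y) :
    (8 : ℤ_[2]) ∣ (y ^ 2 - 1) := by
  rcases padic_two_residue y with h | h
  · exact absurd h hy
  obtain ⟨t, ht⟩ := h
  have h2 : (2 : ℤ_[2]) ∣ t * (t + 1) := by
    rcases padic_two_residue t with h | h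
    · exact h.mul_right _
    · obtain ⟨s, hs⟩ := h
      exact ⟨(2 * s + 1) * (s + 1), by linear_combination (t + 2 * s + 2) * hs⟩
  obtain ⟨u, hu⟩ := h2
  exact ⟨u, by linear_combination (y + 1 + 2 * t) * ht + 4 * hu⟩

/-- If `β, η` are `2`-adic units with `η ≡ β (mod 4)` and `η ≢ β (mod 8)`,
then `2η` is not represented by `x² + 2β y² - 4 z²` over `ℤ₂`. -/
theorem two_eta_not_represented (β η : ℤ_[2]) (hβ : IsUnit β) (hη : IsUnit η)
    (h4 : (4 : ℤ_[2]) ∣ (η - β)) (h8 : ¬ (8 : ℤ_[2]) ∣ (η - β)) :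
    ¬ ∃ x y z : ℤ_[2], 2 * η = x ^ 2 + 2 * β * y ^ 2 - 4 * z ^ 2 := by
  rintro ⟨x, y, z, h⟩
  have hp : Prime (2 : ℤ_[2]) := by exact_mod_cast PadicInt.prime_p (p := 2)
  have h2ne : (2 : ℤ_[2]) ≠ 0 := hp.ne_zero
  -- x is even
  have hx : (2 : ℤ_[2]) ∣ x := by
    have : (2 : ℤ_[2]) ∣ x ^ 2 :=
      ⟨η - β * y ^ 2 + 2 * z ^ 2, by linear_combination -h⟩
    exact hp.dvd_of_dvd_pow this
  obtain ⟨x', rfl⟩ := hx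
  have heq : η = 2 * x' ^ 2 + β * y ^ 2 - 2 * z ^ 2 :=
    mul_left_cancel₀ h2ne (by linear_combination h)
  -- y is a unit
  have hy : ¬ (2 : ℤ_[2]) ∣ y := by
    intro ⟨s, hs⟩
    have : (2 : ℤ_[2]) ∣ η := ⟨x' ^ 2 + 2 * β * s ^ 2 - z ^ 2,
      by linear_combination heq + β * (y + 2 * s) * hs⟩
    exact hp.not_unit (isUnit_of_dvd_unit this hη)
  obtain ⟨w, hw⟩ := padic_unit_sq y hy
  obtain ⟨v, hv⟩ := h4
  -- 2 ∣ x'^2 - z^2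
  have hxz2 : (2 : ℤ_[2]) ∣ (x' ^ 2 - z ^ 2) := by
    have hc : (2 : ℤ_[2]) * (x' ^ 2 - z ^ 2) = 2 * (2 * (v - 2 * β * w)) := by
      linear_combination hv - β * hw - heq
    exact ⟨v - 2 * β * w, mul_left_cancel₀ h2ne hc⟩
  -- 4 ∣ x'^2 - z^2
  have hd : (2 : ℤ_[2]) ∣ (x' - z) := by
    obtain ⟨m, hm⟩ := hxz2
    rcases hp.dvd_mul.mp (show (2 : ℤ_[2]) ∣ (x' - z) * (x' + z) from
      ⟨m, by linear_combination hm⟩) with h' | h'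
    · exact h'
    · obtain ⟨s, hs⟩ := h'
      exact ⟨s - z, by linear_combination hs⟩
  obtain ⟨s, hs⟩ := hd
  have hxz4 : x' ^ 2 - z ^ 2 = 4 * (s ^ 2 + s * z) := by
    linear_combination (x' + z + 2 * s) * hs
  exact h8 ⟨β * w + s ^ 2 + s * z, by linear_combination heq + β * hw + 2 * hxz4⟩
end
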